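/- (Kaneko) For every positive integer n, one has ∑_{j=0}^{n+1} C(n+1, j)·(n+j+1)·B_{n+j} = 0; equivalently, writing B̃_k = (k+1)·B_k, one has ∑_{j=0}^{n+1} C(n+1, j)·B̃_{n+j} = 0. -/
import Mathlib

open Finset

private noncomputable def kanekoF (m n : ℕ) : ℚ :=
  ∑ j ∈ Finset.range (m + 1), (m.choose j : ℚ) * bernoulli (n + j)

private lemma kanekoF_rec (m n : ℕ) :
    kanekoF (m + 1) n = kanekoF m n + kanekoF m (n + 1) := by
  unfold kanekoF
  have h1 : ∑ j ∈ Finset.range (m + 2), ((m + 1).choose j : ℚ) * bernoulli (n + j)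
      = ∑ j ∈ Finset.range (m + 2), ((m.choose j : ℚ) * bernoulli (n + j)
        + (if j = 0 then 0 else (m.choose (j - 1) : ℚ) * bernoulli (n + j))) := by
    refine Finset.sum_congr rfl fun j _ => ?_
    cases j with
    | zero => simp
    | succ k =>
        rw [Nat.choose_succ_succ]
        push_cast
        simp only [Nat.succ_eq_add_one]
        ring
  rw [h1, Finset.sum_add_distrib]
  congr 1
  · rw [Finset.sum_range_succ]
    simp [Nat.choose_eq_zero_of_lt (Nat.lt_succ_self m)]
  · rw [Finset.sum_range_succ']
    simp only [Nat.succ_ne_zero, if_false, Nat.succ_sub_one, if_pos rfl, add_zero, reduceIte]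
    refine Finset.sum_congr rfl fun k _ => ?_
    congr 2
    omega

private lemma kanekoF_symm (m : ℕ) : ∀ n : ℕ,
    kanekoF m n = (-1) ^ (m + n) * kanekoF n m := by
  induction m with
  | zero =>
      intro n
      have h0 : kanekoF 0 n = bernoulli n := by simp [kanekoF]
      have h1 : kanekoF n 0 = (if n = 1 then 1 else 0) + bernoulli n := by
        unfold kanekoF
        rw [Finset.sum_range_succ]
        simp only [Nat.choose_self, Nat.cast_one, one_mul, Nat.zero_add]
        rw [sum_bernoulli]
    -- need bernoulli n = (-1)^n * ((if n=1 then 1 else 0) + bernoulli n)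
      rw [h0, h1, Nat.zero_add]
      rcases Nat.even_or_odd n with he | ho
      · have : n ≠ 1 := by rintro rfl; exact (Nat.not_even_iff_odd.2 odd_one) he
        rw [if_neg this, he.neg_one_pow]; ring
      · rw [ho.neg_one_pow]
        rcases eq_or_ne n 1 with rfl | hne
        · norm_num
        · have h2 : bernoulli n = 0 := by
            rw [bernoulli_eq_bernoulli'_of_ne_one hne]
            refine bernoulli'_eq_zero_of_odd ho ?_
            rcases ho with ⟨k, rfl⟩
            omega
          rw [if_neg hne, h2]; ring
  | succ m ih =>
      intro n
      have h1 := kanekoF_rec m n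
      have h2 := kanekoF_rec n m
      have hp : ((-1 : ℚ)) ^ (m + 1 + n) = -(-1 : ℚ) ^ (m + n) := by
        rw [show m + 1 + n = (m + n) + 1 by omega, pow_succ]; ring
      have hp2 : ((-1 : ℚ)) ^ (m + (n + 1)) = -(-1 : ℚ) ^ (m + n) := by
        rw [show m + (n + 1) = (m + n) + 1 by omega, pow_succ]; ring
      rw [h1, ih n, ih (n + 1), h2, hp, hp2]
      ring

theorem kaneko (n : ℕ) (hn : 0 < n) :
    ∑ j ∈ Finset.range (n + 2), ((n + 1).choose j : ℚ) * (n + j + 1) * bernoulli (n + j) = 0 := by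
  have hsplit : ∑ j ∈ Finset.range (n + 2), ((n + 1).choose j : ℚ) * (n + j + 1) * bernoulli (n + j)
      = (n + 1) * kanekoF (n + 1) n
        + ∑ j ∈ Finset.range (n + 2), (j : ℚ) * ((n + 1).choose j : ℚ) * bernoulli (n + j) := by
    unfold kanekoF
    rw [Finset.mul_sum, ← Finset.sum_add_distrib]
    refine Finset.sum_congr rfl fun j _ => ?_
    ring
  have hsecond : ∑ j ∈ Finset.range (n + 2), (j : ℚ) * ((n + 1).choose j : ℚ) * bernoulli (n + j)
      = (n + 1) * kanekoF n (n + 1) := by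
    rw [Finset.sum_range_succ']
    simp only [Nat.cast_zero, zero_mul, add_zero]
    unfold kanekoF
    rw [Finset.mul_sum]
    refine Finset.sum_congr rfl fun k _ => ?_
    have hc : ((k : ℚ) + 1) * ((n + 1).choose (k + 1) : ℚ) = ((n : ℚ) + 1) * (n.choose k : ℚ) := by
      have := Nat.add_one_mul_choose_eq n k
      have : ((n + 1) * n.choose k : ℕ) = ((n + 1).choose (k + 1) * (k + 1) : ℕ) := this
      exact_mod_cast by push_cast [this]; ring
    push_cast
    calc ((k : ℚ) + 1) * ((n + 1).choose (k + 1) : ℚ) * bernoulli (n + (k + 1))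
        = ((n : ℚ) + 1) * (n.choose k : ℚ) * bernoulli (n + (k + 1)) := by rw [hc]
      _ = ((n : ℚ) + 1) * ((n.choose k : ℚ) * bernoulli (n + 1 + k)) := by
          rw [show n + (k + 1) = n + 1 + k by omega]; ring
  have hsym : kanekoF (n + 1) n = - kanekoF n (n + 1) := by
    rw [kanekoF_symm (n + 1) n]
    have : (-1 : ℚ) ^ (n + 1 + n) = -1 := by
      have : n + 1 + n = 2 * n + 1 := by omega
      rw [this, pow_succ, pow_mul]; norm_num
    rw [this]; ring
  rw [hsplit, hsecond, hsym]
  ring
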